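/- Let g, b, θmax ∈ ℝ with g ≥ 0 and θmax > 0, and set k = (1 - cos θmax)/θmax². Let v_n, v_m, θ, ĉ ∈ ℝ satisfy ĉ ≤ 1 - k·θ². Define the LPAC active power flows p_{nm} = g(v_n - v_m) + g(1 - ĉ) - b·θ and p_{mn} = g(v_m - v_n) + g(1 - ĉ) + b·θ. Then p_{nm} + p_{mn} = 2g(1 - ĉ) ≥ 2g·k·θ² ≥ 0. -/
import Mathlib

/-- LPAC transmission losses: exact expression and analytical lower bound. -/
theorem lpac_active_losses (g b θmax : ℝ) (hg : 0 ≤ g) (hθmax : 0 < θmax)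
    (vn vm θ chat : ℝ) (hchat : chat ≤ 1 - (1 - Real.cos θmax) / θmax ^ 2 * θ ^ 2) :
    (g * (vn - vm) + g * (1 - chat) - b * θ) + (g * (vm - vn) + g * (1 - chat) + b * θ)
      = 2 * g * (1 - chat) ∧
    2 * g * (1 - chat) ≥ 2 * g * ((1 - Real.cos θmax) / θmax ^ 2) * θ ^ 2 ∧
    2 * g * ((1 - Real.cos θmax) / θmax ^ 2) * θ ^ 2 ≥ 0 := by
  have hk : 0 ≤ (1 - Real.cos θmax) / θmax ^ 2 := by
    apply div_nonneg
    · linarith [Real.cos_le_one θmax]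
    · positivity
  refine ⟨by ring, ?_, ?_⟩
  · nlinarith [sq_nonneg θ]
  · positivity
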